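/- For the deformed H2 polynomial Q(u,x,y,z;α,β) = (u−z)(x−y) + (β−α)(u+x+y+z) − α² + β² − ε(β−α)(2x+α+β)(2y+α+β) − ε(β−α)³, the edge biquadratic h₃₄ := Q·Q_{,34} − Q_{,3}Q_{,4} equals (β−α)·2·(u + x + α − 2ε(x+α)²), i.e. it factorizes as k(α,β)·f(u,x;α) with k antisymmetric in (α,β) and f independent of β. -/
import Mathlib


/-- The deformation of H2. -/
def QH2 (ε u x y z α β : ℝ) : ℝ :=
  (u - z) * (x - y) + (β - α) * (u + x + y + z) - α ^ 2 + β ^ 2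
    - ε * (β - α) * (2 * x + α + β) * (2 * y + α + β) - ε * (β - α) ^ 3

lemma deriv_affine (c d t : ℝ) : deriv (fun s => c * s + d) t = c := by
  have h := ((hasDerivAt_id t).const_mul c).add_const d
  simpa using h.deriv

lemma derivY (ε u x z α β : ℝ) (y : ℝ) :
    deriv (fun y' => QH2 ε u x y' z α β) y
      = -(u - z) + (β - α) - 2 * ε * (β - α) * (2 * x + α + β) := by
  have A : (fun y' => QH2 ε u x y' z α β)
      = fun y' => (-(u - z) + (β - α) - 2 * ε * (β - α) * (2 * x + α + β)) * y'
          + QH2 ε u x 0 z α β := by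
    funext y'; simp only [QH2]; ring
  rw [A, deriv_affine]

/-- The edge biquadratic h₃₄ = Q·Q_{,34} − Q_{,3}·Q_{,4} of deformed H2 equals
(β−α)·2·(u + x + α - 2ε(x+α)²): an antisymmetric k(α,β)=β−α times f(u,x;α). -/
theorem stmt11 (ε u x y z α β : ℝ) :
    QH2 ε u x y z α β *
        deriv (fun z' => deriv (fun y' => QH2 ε u x y' z' α β) y) z
      - deriv (fun y' => QH2 ε u x y' z α β) y *
        deriv (fun z' => QH2 ε u x y z' α β) z
      = (β - α) * (2 * (u + x + α - 2 * ε * (x + α) ^ 2)) := by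
  have h1 : deriv (fun z' => deriv (fun y' => QH2 ε u x y' z' α β) y) z = 1 := by
    have A : (fun z' => deriv (fun y' => QH2 ε u x y' z' α β) y)
        = fun z' => 1 * z' + (-u + (β - α) - 2 * ε * (β - α) * (2 * x + α + β)) := by
      funext z'; rw [derivY]; ring
    rw [A, deriv_affine]
  have h2 : deriv (fun z' => QH2 ε u x y z' α β) z = -(x - y) + (β - α) := by
    have A : (fun z' => QH2 ε u x y z' α β)
        = fun z' => (-(x - y) + (β - α)) * z' + QH2 ε u x y 0 α β := by
      funext z'; simp only [QH2]; ring
    rw [A, deriv_affine]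
  rw [h1, h2, derivY]
  simp only [QH2]; ring
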